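/- Let (R, m, k) be an F-finite local ring of prime characteristic p and M a finitely generated R-module with depth_R(M) = 0. Then for all sufficiently large e, the residue field k is a direct summand of {}^{f^e} M (as a left R-module). -/

import Mathlib

open scoped TensorProduct

universe u v

/-- `R` viewed as an `R`-algebra via the `e`-th iterate of the Frobenius map. -/
def FrobAlg (R : Type u) [CommRing R] (p : ℕ) [ExpChar R p] (_e : ℕ) : Type u := R

instance (R : Type u) [CommRing R] (p : ℕ) [ExpChar R p] (e : ℕ) :
    CommRing (FrobAlg R p e) := inferInstanceAs (CommRing R)

/-- The `e`-th iterated Frobenius, viewed as a ring map `R →+* FrobAlg R p e`. -/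
def frobToAlg (R : Type u) [CommRing R] (p : ℕ) [ExpChar R p] (e : ℕ) :
    R →+* FrobAlg R p e := iterateFrobenius R p e

instance (R : Type u) [CommRing R] (p : ℕ) [ExpChar R p] (e : ℕ) :
    Algebra R (FrobAlg R p e) := (frobToAlg R p e).toAlgebra

/-- Restriction of scalars along the `e`-th Frobenius: `{}^{f^e} M`. -/
def FrobRes (R : Type u) [CommRing R] (p : ℕ) [ExpChar R p] (_e : ℕ) (M : Type v) : Type v := M

instance (R : Type u) [CommRing R] (p : ℕ) [ExpChar R p] (e : ℕ) (M : Type v) [AddCommGroup M] :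
    AddCommGroup (FrobRes R p e M) := inferInstanceAs (AddCommGroup M)

instance (R : Type u) [CommRing R] (p : ℕ) [ExpChar R p] (e : ℕ) (M : Type v)
    [AddCommGroup M] [Module R M] : Module R (FrobRes R p e M) :=
  Module.compHom M (iterateFrobenius R p e)

/-- The `e`-th Peskine–Szpiro (Frobenius) functor `F^e(M) = M ⊗_R {}^{f^e} R`,
realized as base change along the `e`-th Frobenius. -/
def FrobF (R : Type u) [CommRing R] (p : ℕ) [ExpChar R p] (e : ℕ)
    (M : Type u) [AddCommGroup M] [Module R M] : Type u :=
  FrobAlg R p e ⊗[R] M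

noncomputable instance (R : Type u) [CommRing R] (p : ℕ) [ExpChar R p] (e : ℕ)
    (M : Type u) [AddCommGroup M] [Module R M] : AddCommGroup (FrobF R p e M) :=
  inferInstanceAs (AddCommGroup (FrobAlg R p e ⊗[R] M))

noncomputable instance (R : Type u) [CommRing R] (p : ℕ) [ExpChar R p] (e : ℕ)
    (M : Type u) [AddCommGroup M] [Module R M] : Module (FrobAlg R p e) (FrobF R p e M) :=
  inferInstanceAs (Module (FrobAlg R p e) (FrobAlg R p e ⊗[R] M))

/-- The action of `F^e` on maps. -/
noncomputable def FrobFMap (R : Type u) [CommRing R] (p : ℕ) [ExpChar R p] (e : ℕ)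
    {M N : Type u} [AddCommGroup M] [Module R M] [AddCommGroup N] [Module R N]
    (g : M →ₗ[R] N) : FrobF R p e M →ₗ[FrobAlg R p e] FrobF R p e N :=
  LinearMap.baseChange (FrobAlg R p e) g

/-- The dual Frobenius functor `F̃^e(M) = Hom_R({}^{f^e} R, M)`. -/
def FrobFt (R : Type u) [CommRing R] (p : ℕ) [ExpChar R p] (e : ℕ)
    (M : Type v) [AddCommGroup M] [Module R M] : Type (max u v) :=
  FrobAlg R p e →ₗ[R] M

instance (R : Type u) [CommRing R] (p : ℕ) [ExpChar R p] (e : ℕ) (M : Type v)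
    [AddCommGroup M] [Module R M] : AddCommGroup (FrobFt R p e M) :=
  inferInstanceAs (AddCommGroup (FrobAlg R p e →ₗ[R] M))

/-- The (untwisted) module structure on `F̃^e(M)`, given by `(a • θ)(s) = θ (a * s)`. -/
instance (R : Type u) [CommRing R] (p : ℕ) [ExpChar R p] (e : ℕ) (M : Type v)
    [AddCommGroup M] [Module R M] : Module (FrobAlg R p e) (FrobFt R p e M) where
  smul a θ := LinearMap.comp (σ₁₂ := RingHom.id R) θ (LinearMap.mulLeft R a)
  one_smul θ := by
    change LinearMap.comp (σ₁₂ := RingHom.id R) θ (LinearMap.mulLeft R 1) = θ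
    ext s; exact congrArg (show FrobAlg R p e →ₗ[R] M from θ) (one_mul s)
  mul_smul a b θ := by
    change LinearMap.comp (σ₁₂ := RingHom.id R) θ (LinearMap.mulLeft R (a * b)) =
      LinearMap.comp (σ₁₂ := RingHom.id R)
        (LinearMap.comp (σ₁₂ := RingHom.id R) θ (LinearMap.mulLeft R b)) (LinearMap.mulLeft R a)
    ext s; exact congrArg (show FrobAlg R p e →ₗ[R] M from θ) (by ring : a * b * s = b * (a * s))
  smul_zero a := by apply LinearMap.ext; intro s; rfl
  smul_add a θ₁ θ₂ := by apply LinearMap.ext; intro s; rfl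
  add_smul a b θ := by
    change LinearMap.comp (σ₁₂ := RingHom.id R) θ (LinearMap.mulLeft R (a + b)) =
      LinearMap.comp (σ₁₂ := RingHom.id R) θ (LinearMap.mulLeft R a) +
      LinearMap.comp (σ₁₂ := RingHom.id R) θ (LinearMap.mulLeft R b)
    ext s; exact (congrArg (show FrobAlg R p e →ₗ[R] M from θ) (add_mul a b s)).trans (map_add (show FrobAlg R p e →ₗ[R] M from θ) _ _)
  zero_smul θ := by
    change LinearMap.comp (σ₁₂ := RingHom.id R) θ (LinearMap.mulLeft R 0) = 0
    ext s; exact (congrArg (show FrobAlg R p e →ₗ[R] M from θ) (zero_mul s)).trans (map_zero (show FrobAlg R p e →ₗ[R] M from θ))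

/-- The action of `F̃^e` on maps. -/
def FrobFtMap (R : Type u) [CommRing R] (p : ℕ) [ExpChar R p] (e : ℕ)
    {M N : Type v} [AddCommGroup M] [Module R M] [AddCommGroup N] [Module R N]
    (g : M →ₗ[R] N) : FrobFt R p e M →ₗ[FrobAlg R p e] FrobFt R p e N where
  toFun θ := g.comp θ
  map_add' θ₁ θ₂ := by apply LinearMap.ext; intro s; exact map_add g ((show FrobAlg R p e →ₗ[R] M from θ₁) s) ((show FrobAlg R p e →ₗ[R] M from θ₂) s)
  map_smul' a θ := by apply LinearMap.ext; intro s; rfl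

/-- Any `R`-module is a module over `FrobAlg R p e` via the untwisted action. -/
def untwist (R : Type u) [CommRing R] (p : ℕ) [ExpChar R p] (e : ℕ)
    (M : Type v) [AddCommGroup M] [Module R M] : Module (FrobAlg R p e) M :=
  (inferInstance : Module R M)

/-- `R` is `F`-finite: `{}^f R` is a finitely generated (left) `R`-module. -/
def IsFFinite (R : Type u) [CommRing R] (p : ℕ) [ExpChar R p] : Prop :=
  Module.Finite R (FrobRes R p 1 R)

/-- `R` is FPI: the Frobenius functor preserves injective modules. -/
def IsFPI (R : Type u) [CommRing R] (p : ℕ) [ExpChar R p] : Prop :=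
  ∀ (I : Type u) (_ : AddCommGroup I) (_ : Module R I),
    Module.Injective R I → Module.Injective (FrobAlg R p 1) (FrobF R p 1 I)
/-- Dao.  Let `(R, 𝔪, k)` be an `F`-finite local ring of prime
characteristic `p` and `M` a finitely generated `R`-module with `depth_R(M) = 0`
(equivalently, `𝔪` is an associated prime of `M`).  Then for all sufficiently large
`e`, the residue field `k` is a direct summand of `{}^{f^e} M`. -/
theorem residueField_summand_of_depth_zero (R : Type u) [CommRing R]
    [IsNoetherianRing R] [IsLocalRing R] (p : ℕ) [Fact p.Prime] [CharP R p]
    (hFf : IsFFinite R p)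
    (M : Type u) [AddCommGroup M] [Module R M] [Module.Finite R M]
    (hdepth : IsLocalRing.maximalIdeal R ∈ associatedPrimes R M) :
    ∃ E : ℕ, ∀ e : ℕ, E ≤ e →
      ∃ (ι : IsLocalRing.ResidueField R →ₗ[R] FrobRes R p e M)
        (π : FrobRes R p e M →ₗ[R] IsLocalRing.ResidueField R),
          π ∘ₗ ι = LinearMap.id := by
  classical
  obtain ⟨hprime, x, hx⟩ := isAssociatedPrime_iff.mp hdepth
  have hxmem : ∀ r : R, r ∈ IsLocalRing.maximalIdeal R ↔ r • x = 0 := by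
    intro r
    rw [hx, Submodule.mem_colon_singleton, Submodule.mem_bot]
  have hx0 : x ≠ 0 := by
    rintro rfl
    exact hprime.ne_top ((Ideal.eq_top_iff_one _).mpr ((hxmem 1).mpr (smul_zero 1)))
  -- Krull intersection theorem
  have hKrull : (⨅ i : ℕ, (IsLocalRing.maximalIdeal R) ^ i • ⊤ : Submodule R M) = ⊥ :=
    Ideal.iInf_pow_smul_eq_bot_of_isLocalRing (IsLocalRing.maximalIdeal R) (M := M)
      hprime.ne_top
  have hex : ∃ n : ℕ, x ∉ ((IsLocalRing.maximalIdeal R) ^ n • ⊤ : Submodule R M) := by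
    by_contra h
    push_neg at h
    exact hx0 (by simpa [hKrull] using (Submodule.mem_iInf _).mpr h)
  obtain ⟨n, hn⟩ := hex
  refine ⟨n, fun e he => ?_⟩
  have hp1 : 1 < p := (Fact.out : p.Prime).one_lt
  have hnpe : n ≤ p ^ e := le_trans he (le_of_lt (Nat.lt_pow_self (n := e) hp1))
  have hxq : x ∉ ((IsLocalRing.maximalIdeal R) ^ (p ^ e) • ⊤ : Submodule R M) := fun h =>
    hn (Submodule.smul_mono_left (Ideal.pow_le_pow_right hnpe) h)
  -- `m • ⊤` of the twisted module sits inside `m ^ (p ^ e) • ⊤` of the untwisted one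
  let T : Submodule R (FrobRes R p e M) :=
    { carrier := (((IsLocalRing.maximalIdeal R) ^ (p ^ e) • ⊤ : Submodule R M) : Set M)
      add_mem' := fun ha hb => Submodule.add_mem _ ha hb
      zero_mem' := Submodule.zero_mem _
      smul_mem' := fun c y hy => by
        have : (c ^ (p ^ e)) • (@id M y) ∈
            ((IsLocalRing.maximalIdeal R) ^ (p ^ e) • ⊤ : Submodule R M) :=
          Submodule.smul_mem _ _ hy
        exact this }
  have hST : ((IsLocalRing.maximalIdeal R) • ⊤ : Submodule R (FrobRes R p e M)) ≤ T := by
    refine Submodule.smul_le.mpr fun r hr y _ => ?_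
    have : (r ^ (p ^ e)) • (@id M y) ∈
        ((IsLocalRing.maximalIdeal R) ^ (p ^ e) • ⊤ : Submodule R M) :=
      Submodule.smul_mem_smul (Ideal.pow_mem_pow hr _) Submodule.mem_top
    exact this
  have hxS : x ∉ ((IsLocalRing.maximalIdeal R) • ⊤ : Submodule R (FrobRes R p e M)) :=
    fun h => hxq (hST h)
  -- the quotient is a `k`-vector space
  letI : Module (IsLocalRing.ResidueField R)
      (FrobRes R p e M ⧸ ((IsLocalRing.maximalIdeal R) • ⊤ :
        Submodule R (FrobRes R p e M))) :=
    inferInstanceAs (Module (R ⧸ IsLocalRing.maximalIdeal R)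
      (FrobRes R p e M ⧸ ((IsLocalRing.maximalIdeal R) • ⊤ :
        Submodule R (FrobRes R p e M))))
  have hv0 : (Submodule.Quotient.mk (@id (FrobRes R p e M) x) : FrobRes R p e M ⧸
      ((IsLocalRing.maximalIdeal R) • ⊤ : Submodule R (FrobRes R p e M))) ≠ 0 := by
    rw [Ne, Submodule.Quotient.mk_eq_zero]
    exact hxS
  obtain ⟨φ, hφ⟩ : ∃ φ : Module.Dual (IsLocalRing.ResidueField R)
      (FrobRes R p e M ⧸ ((IsLocalRing.maximalIdeal R) • ⊤ :
        Submodule R (FrobRes R p e M))),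
      φ (Submodule.Quotient.mk (@id (FrobRes R p e M) x)) ≠ 0 := by
    by_contra h
    push_neg at h
    exact hv0 ((Module.forall_dual_apply_eq_zero_iff (IsLocalRing.ResidueField R) _).mp h)
  set f := (φ (Submodule.Quotient.mk (@id (FrobRes R p e M) x)))⁻¹ • φ with hf
  have hfx : f (Submodule.Quotient.mk (@id (FrobRes R p e M) x)) = 1 := by
    simp only [hf, LinearMap.smul_apply, smul_eq_mul]
    exact inv_mul_cancel₀ hφ
  -- scalar compatibility facts
  have mk_smul : ∀ (r : R) (y : FrobRes R p e M),
      (Submodule.Quotient.mk (r • y) : FrobRes R p e M ⧸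
          ((IsLocalRing.maximalIdeal R) • ⊤ : Submodule R (FrobRes R p e M)))
        = (IsLocalRing.residue R r) • Submodule.Quotient.mk y :=
    fun r y => rfl
  have res_smul : ∀ (r : R) (c : IsLocalRing.ResidueField R),
      r • c = (IsLocalRing.residue R r) * c := by
    intro r c
    rw [Algebra.smul_def, IsLocalRing.ResidueField.algebraMap_eq]
  -- the projection π
  let π : FrobRes R p e M →ₗ[R] IsLocalRing.ResidueField R :=
    { toFun := fun y => f (Submodule.Quotient.mk y)
      map_add' := fun y z => by
        show f (Submodule.Quotient.mk (y + z)) =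
          f (Submodule.Quotient.mk y) + f (Submodule.Quotient.mk z)
        rw [Submodule.Quotient.mk_add, map_add]
      map_smul' := fun r y => by
        show f (Submodule.Quotient.mk (r • y)) = r • f (Submodule.Quotient.mk y)
        rw [mk_smul r y, map_smul, res_smul, smul_eq_mul] }
  -- the inclusion ι
  have hker : (IsLocalRing.maximalIdeal R : Submodule R R)
      ≤ LinearMap.ker (LinearMap.toSpanSingleton R (FrobRes R p e M) x) := by
    intro r hr
    rw [LinearMap.mem_ker]
    have : (r ^ (p ^ e)) • x = (0 : M) :=
      (hxmem _).mp (Ideal.pow_mem_of_mem _ hr _ (pow_pos (by omega : 0 < p) e))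
    exact this
  let ι : IsLocalRing.ResidueField R →ₗ[R] FrobRes R p e M :=
    Submodule.liftQ (IsLocalRing.maximalIdeal R : Submodule R R)
      (LinearMap.toSpanSingleton R (FrobRes R p e M) x) hker
  refine ⟨ι, π, ?_⟩
  apply LinearMap.ext
  intro c
  obtain ⟨r, rfl⟩ := Ideal.Quotient.mk_surjective c
  have hι : ι (Ideal.Quotient.mk (IsLocalRing.maximalIdeal R) r)
      = r • (@id (FrobRes R p e M) x) := rfl
  show f (Submodule.Quotient.mk (r • (@id (FrobRes R p e M) x)))
    = Ideal.Quotient.mk (IsLocalRing.maximalIdeal R) r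
  rw [mk_smul r (@id (FrobRes R p e M) x), map_smul, smul_eq_mul, hfx, mul_one]
  rfl
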